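/- arXiv:1009.2097 — 9 statements merged into one kernel-verified Lean document; each statement's English description precedes it below -/
import Mathlib

section
/- If z : ℝ → ℂ satisfies the ODE dz/dt = M / conj(z(t)) with M : ℂ, Re M ≠ 0, and z(0) ≠ 0, then the function z(t) = T(t) · exp(i · (Im M / Re M) · log T(t)) · z(0), where T(t) = sqrt(1 + (Re M)·t/(|z(0)|²/2)), solves the ODE on the interval where 1 + (Re M)·t/(|z(0)|²/2) > 0. -/
open Complex ComplexConjugate

/-- The explicit self-similar formula solves `dz/dt = M / conj z` on the
interval where `1 + (Re M) t / (|z(0)|²/2) > 0`, when `Re M ≠ 0`. -/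
theorem stmt0 (M z0 : ℂ) (hM : M.re ≠ 0) (hz0 : z0 ≠ 0)
    (T : ℝ → ℝ) (hT : ∀ t, T t = Real.sqrt (1 + M.re * t / (‖z0‖ ^ 2 / 2)))
    (z : ℝ → ℂ)
    (hz : ∀ t, z t = (T t : ℂ) * Complex.exp (Complex.I * (M.im / M.re) * Real.log (T t)) * z0) :
    ∀ t : ℝ, 1 + M.re * t / (‖z0‖ ^ 2 / 2) > 0 →
      HasDerivAt z (M / conj (z t)) t := by
  intro t hu
  have habs : 0 < ‖z0‖ := norm_pos_iff.mpr hz0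
  set a : ℝ := ‖z0‖ ^ 2 / 2 with ha
  have ha0 : 0 < a := by rw [ha]; positivity
  set k : ℝ := M.im / M.re with hk
  have hs0 : 0 < Real.sqrt (1 + M.re * t / a) := Real.sqrt_pos.mpr hu
  set s : ℝ := Real.sqrt (1 + M.re * t / a) with hs
  set L : ℝ := Real.log s with hL
  have hMC : (M.re : ℂ) ≠ 0 := Complex.ofReal_ne_zero.mpr hM
  -- rewrite z as an explicit function
  have hzfun : z = fun x : ℝ =>
      ((Real.sqrt (1 + M.re * x / a) : ℝ) : ℂ) *
        Complex.exp (Complex.I * (k : ℂ) * ((Real.log (Real.sqrt (1 + M.re * x / a)) : ℝ) : ℂ)) * z0 := by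
    funext x
    rw [hz, hT, hk]
    push_cast
    ring_nf
  have h1 : HasDerivAt (fun x : ℝ => 1 + M.re * x / a) (M.re / a) t := by
    simpa using (((hasDerivAt_id t).const_mul M.re).div_const a).const_add 1
  set T' : ℝ := 1 / (2 * s) * (M.re / a) with hT'
  have h2 : HasDerivAt (fun x : ℝ => Real.sqrt (1 + M.re * x / a)) T' t := by
    convert h1.sqrt (ne_of_gt hu) using 1; rw [hT']; ring
  have h3 : HasDerivAt (fun x : ℝ => Real.log (Real.sqrt (1 + M.re * x / a))) (T' / s) t :=
    h2.log (ne_of_gt hs0)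
  have h4 := h3.ofReal_comp
  have h5 := h4.const_mul (Complex.I * (k : ℂ))
  have h6 := h5.cexp
  have h7 := h2.ofReal_comp
  have h8 := (h7.mul h6).mul_const z0
  rw [hzfun]
  convert h8 using 1
  case e'_4 => rfl
  case e'_8 => rfl
  simp only [← hs, ← hL]
  -- now the value equality
  have hsC : (s : ℂ) ≠ 0 := Complex.ofReal_ne_zero.mpr (ne_of_gt hs0)
  have hcz0 : conj z0 ≠ 0 := by simpa using hz0
  have hE : Complex.exp (Complex.I * (k : ℂ) * (L : ℂ)) ≠ 0 := Complex.exp_ne_zero _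
  have h2a : z0 * conj z0 = ((2 * a : ℝ) : ℂ) := by
    rw [Complex.mul_conj]
    norm_cast
    rw [Complex.normSq_eq_norm_sq, ha]
    ring
  have hconj : conj (((s : ℝ) : ℂ) * Complex.exp (Complex.I * (k : ℂ) * (L : ℂ)) * z0)
      = (s : ℂ) * Complex.exp (-(Complex.I * (k : ℂ) * (L : ℂ))) * conj z0 := by
    simp [map_mul, ← Complex.exp_conj, Complex.conj_I]
  have hMsplit : M = (M.re : ℂ) * (1 + Complex.I * (k : ℂ)) := by
    have h : (M.re : ℂ) * (k : ℂ) = (M.im : ℂ) := by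
      rw [hk]; push_cast; field_simp
    calc M = (M.re : ℂ) + (M.im : ℂ) * Complex.I := (Complex.re_add_im M).symm
    _ = (M.re : ℂ) * (1 + Complex.I * (k : ℂ)) := by rw [← h]; ring
  have haC : (a : ℂ) ≠ 0 := Complex.ofReal_ne_zero.mpr (ne_of_gt ha0)
  clear_value s L a T'
  clear hs hL ha hk hzfun h1 h2 h3 h4 h5 h6 h7 h8 hz hT hu
  rw [hconj, Complex.exp_neg, hMsplit, div_eq_iff (by
    exact mul_ne_zero (mul_ne_zero hsC (inv_ne_zero hE)) hcz0), hT']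
  push_cast
  push_cast at h2a
  field_simp [hE, hsC, haC]
  linear_combination (-(1 + Complex.I * (k:ℂ))) * h2a
end

section
/- If z : ℝ → ℂ satisfies dz/dt = M / conj(z(t)) with M purely imaginary (Re M = 0) and z(0) ≠ 0, then z(t) = exp(i · (Im M / |z(0)|²) · t) · z(0) for all t; in particular |z(t)| = |z(0)| for all t. -/
open Complex ComplexConjugate

/-- Purely rotational self-similar motion: with `Re M = 0`, a solution of
`dz/dt = M / conj z` spins rigidly. -/
theorem stmt1 (M : ℂ) (hM : M.re = 0) (z : ℝ → ℂ) (hz0 : z 0 ≠ 0)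
    (hz : ∀ t, z t ≠ 0)
    (hode : ∀ t, HasDerivAt z (M / conj (z t)) t) :
    (∀ t : ℝ, z t = Complex.exp (Complex.I * (M.im / ‖z 0‖ ^ 2) * t) * z 0) ∧
      (∀ t : ℝ, ‖z t‖ = ‖z 0‖) := by
  -- conjugate of z is differentiable
  have hconj : ∀ t, HasDerivAt (fun s => conj (z s)) (conj (M / conj (z t))) t := by
    intro t
    exact (Complex.conjCLE.toContinuousLinearMap.hasFDerivAt.comp_hasDerivAt t (hode t))
  have hMconj : M + conj M = 0 := by
    apply Complex.ext <;> simp [hM]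
  -- g t = z t * conj (z t) is constant
  have hg : ∀ t, HasDerivAt (fun s => z s * conj (z s)) 0 t := by
    intro t
    have h := (hode t).mul (hconj t)
    have hzc : conj (z t) ≠ 0 := by simpa using hz t
    have : M / conj (z t) * conj (z t) + z t * conj (M / conj (z t)) = 0 := by
      rw [map_div₀, Complex.conj_conj, div_mul_cancel₀ _ hzc, ← mul_div_assoc,
        mul_comm (z t), mul_div_assoc, div_self (hz t), mul_one]
      exact hMconj
    rwa [this] at h
  have hgconst : ∀ t, z t * conj (z t) = z 0 * conj (z 0) := by
    intro t
    have hdiff : Differentiable ℝ (fun s => z s * conj (z s)) :=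
      fun s => (hg s).differentiableAt
    exact is_const_of_deriv_eq_zero hdiff (fun s => (hg s).deriv) t 0
  have habs : ∀ t, ‖z t‖ = ‖z 0‖ := by
    intro t
    have h := hgconst t
    rw [Complex.mul_conj, Complex.mul_conj] at h
    have : Complex.normSq (z t) = Complex.normSq (z 0) := by exact_mod_cast h
    simp [Complex.norm_def, this]
  have habs0 : (‖z 0‖ : ℝ) ≠ 0 := by
    simpa using hz0
  -- rewrite the ODE as z' = ω z
  set ω : ℂ := Complex.I * ((M.im / ‖z 0‖ ^ 2 : ℝ) : ℂ) with hω
  have hM' : M = Complex.I * (M.im : ℂ) := by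
    apply Complex.ext <;> simp [hM]
  have hode' : ∀ t, HasDerivAt z (ω * z t) t := by
    intro t
    have key : M / conj (z t) = ω * z t := by
      have hzc : conj (z t) ≠ 0 := by simpa using hz t
      have h1 : z t * conj (z t) = ((‖z 0‖ ^ 2 : ℝ) : ℂ) := by
        rw [hgconst t, Complex.mul_conj]
        norm_cast
        exact (Complex.sq_norm _).symm
      have h2 : ((‖z 0‖ : ℂ)) ≠ 0 := Complex.ofReal_ne_zero.mpr habs0
      rw [hω, div_eq_iff hzc, mul_assoc, h1, hM']
      push_cast
      field_simp
      simp
    rw [← key]; exact hode t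
  -- h t = exp(-(ω t)) * z t is constant
  have hexp : ∀ t : ℝ, HasDerivAt (fun s : ℝ => Complex.exp (-(ω * s)))
      (-ω * Complex.exp (-(ω * t))) t := by
    intro t
    have h1 : HasDerivAt (fun s : ℝ => -(ω * (s : ℂ))) (-ω) t := by
      have := ((Complex.ofRealCLM.hasDerivAt (x := t)).const_mul ω).neg
      exact this.congr_deriv (by simp)
    simpa [mul_comm] using h1.cexp
  have hh : ∀ t, HasDerivAt (fun s : ℝ => Complex.exp (-(ω * s)) * z s) 0 t := by
    intro t
    have h := (hexp t).mul (hode' t)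
    have : -ω * Complex.exp (-(ω * t)) * z t + Complex.exp (-(ω * t)) * (ω * z t) = 0 := by
      ring
    rwa [this] at h
  have hhconst : ∀ t : ℝ, Complex.exp (-(ω * t)) * z t = z 0 := by
    intro t
    have hdiff : Differentiable ℝ (fun s : ℝ => Complex.exp (-(ω * s)) * z s) :=
      fun s => (hh s).differentiableAt
    have := is_const_of_deriv_eq_zero hdiff (fun s => (hh s).deriv) t 0
    simpa using this
  refine ⟨fun t => ?_, habs⟩
  have h := hhconst t
  have hne : Complex.exp (-(ω * t)) ≠ 0 := Complex.exp_ne_zero _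
  have : z t = Complex.exp (ω * t) * z 0 := by
    rw [← h, ← mul_assoc, ← Complex.exp_add]
    simp
  rw [this, hω]
  push_cast
  ring_nf
end

section
/- If z : ℝ → ℂ satisfies dz/dt = M / conj(z(t)) with Re M < 0 and z(0) ≠ 0, then z(t) → 0 as t → t_c⁻ where t_c = -|z(0)|²/(2 Re M) > 0; i.e., the solution collapses to the origin in finite time. -/
open Complex ComplexConjugate

/-- Finite-time collapse: with `Re M < 0`, a solution of `dz/dt = M / conj z`
tends to `0` as `t → t_c⁻`, where `t_c = -|z(0)|²/(2 Re M)`. -/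
theorem stmt2 (M : ℂ) (hM : M.re < 0) (z : ℝ → ℂ) (hz0 : z 0 ≠ 0)
    (tc : ℝ) (htc : tc = -(‖z 0‖) ^ 2 / (2 * M.re))
    (hz : ∀ t ∈ Set.Ico (0 : ℝ) tc, z t ≠ 0)
    (hode : ∀ t ∈ Set.Ico (0 : ℝ) tc, HasDerivAt z (M / conj (z t)) t) :
    0 < tc ∧ Filter.Tendsto z (nhdsWithin tc (Set.Ico 0 tc)) (nhds 0) := by
  have habs : 0 < ‖z 0‖ := norm_pos_iff.mpr hz0
  have habs2 : 0 < ‖z 0‖ ^ 2 := by positivity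
  have htc0 : 0 < tc := by
    rw [htc]
    exact div_pos_of_neg_of_neg (by linarith) (by linarith)
  refine ⟨htc0, ?_⟩
  set f : ℝ → ℝ := fun s => (z s).re ^ 2 + (z s).im ^ 2 with hfdef
  have hderiv : ∀ t ∈ Set.Ico (0 : ℝ) tc, HasDerivAt f (2 * M.re) t := by
    intro t ht
    have hz' := hode t ht
    have hu : HasDerivAt (fun s => (z s).re) ((M / conj (z t)).re) t :=
      Complex.reCLM.hasFDerivAt.comp_hasDerivAt t hz'
    have hv : HasDerivAt (fun s => (z s).im) ((M / conj (z t)).im) t :=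
      Complex.imCLM.hasFDerivAt.comp_hasDerivAt t hz'
    have h1 : HasDerivAt f
        (2 * (z t).re ^ 1 * (M / conj (z t)).re + 2 * (z t).im ^ 1 * (M / conj (z t)).im) t :=
      (hu.pow 2).add (hv.pow 2)
    have hzt := hz t ht
    have hw : z t * conj (M / conj (z t)) = conj M := by
      rw [map_div₀, Complex.conj_conj]
      field_simp
    have hre := congrArg Complex.re hw
    rw [Complex.mul_re] at hre
    simp only [Complex.conj_re, Complex.conj_im] at hre
    convert h1 using 1
    simp only [pow_one]
    nlinarith [hre]
  have hform : ∀ b ∈ Set.Ico (0 : ℝ) tc, f b = f 0 + 2 * M.re * b := by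
    intro b hb
    set g : ℝ → ℝ := fun s => f s - 2 * M.re * s with hgdef
    have key : ∀ x ∈ Set.Icc (0 : ℝ) b, g x = g 0 := by
      apply constant_of_has_deriv_right_zero
      · intro x hx
        have hx' : x ∈ Set.Ico (0 : ℝ) tc := ⟨hx.1, lt_of_le_of_lt hx.2 hb.2⟩
        exact (((hderiv x hx').sub
          ((hasDerivAt_id x).const_mul (2 * M.re))).continuousAt).continuousWithinAt
      · intro x hx
        have hx' : x ∈ Set.Ico (0 : ℝ) tc := ⟨hx.1, lt_trans hx.2 hb.2⟩
        have hd : HasDerivAt g 0 x := by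
          have := (hderiv x hx').sub ((hasDerivAt_id x).const_mul (2 * M.re))
          rw [show (2 * M.re - 2 * M.re * 1 : ℝ) = 0 by ring] at this
          exact this
        exact hd.hasDerivWithinAt
    have hb' := key b (Set.mem_Icc.mpr ⟨hb.1, le_refl b⟩)
    simp only [hgdef] at hb'
    linarith [hb']
  have hnorm : ∀ b, f b = ‖z b‖ ^ 2 := by
    intro b
    simp only [hfdef, Complex.sq_norm, Complex.normSq_apply]
    ring
  have h0 : f 0 + 2 * M.re * tc = 0 := by
    have hf0 : f 0 = ‖z 0‖ ^ 2 := by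
      rw [hnorm 0]
    have h2 : (2 : ℝ) * M.re ≠ 0 := by linarith
    rw [hf0, htc]
    field_simp
    rw [div_self (by linarith : M.re ≠ 0)]
    ring
  rw [tendsto_zero_iff_norm_tendsto_zero]
  have hcont : Filter.Tendsto (fun b => Real.sqrt (f 0 + 2 * M.re * b))
      (nhdsWithin tc (Set.Ico 0 tc)) (nhds 0) := by
    have hc : Continuous fun b : ℝ => Real.sqrt (f 0 + 2 * M.re * b) := by
      exact Real.continuous_sqrt.comp (continuous_const.add (continuous_const.mul continuous_id))
    have := (hc.tendsto tc).mono_left (nhdsWithin_le_nhds (s := Set.Ico 0 tc))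
    simpa [h0] using this
  refine hcont.congr' ?_
  filter_upwards [self_mem_nhdsWithin] with b hb
  rw [← Real.sqrt_sq (norm_nonneg (z b)), ← hnorm b, hform b hb]
end

section
/- Consider two poles z, z' : ℝ → ℂ with fixed complex strengths μ, μ' evolving by dz/dt = conj(μ')/(conj(z) - conj(z')) and dz'/dt = conj(μ)/(conj(z') - conj(z)). Then d/dt |z(t) - z'(t)|² = 2 Re(μ + μ'). In particular, if Re(μ + μ') = 0 the distance |z - z'| is constant in time. -/
open Complex ComplexConjugate

/-- For a pole pair with fixed strengths `μ, μ'`, the squared distance evolves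
at the constant rate `2 Re(μ + μ')`. -/
theorem stmt3 (μ μ' : ℂ) (z z' : ℝ → ℂ) (hne : ∀ t, z t ≠ z' t)
    (hz : ∀ t, HasDerivAt z (conj μ' / (conj (z t) - conj (z' t))) t)
    (hz' : ∀ t, HasDerivAt z' (conj μ / (conj (z' t) - conj (z t))) t) :
    (∀ t, HasDerivAt (fun s => (‖z s - z' s‖) ^ 2) (2 * (μ + μ').re) t) ∧
      ((μ + μ').re = 0 →
        ∀ t, ‖z t - z' t‖ = ‖z 0 - z' 0‖) := by
  have key : ∀ t, HasDerivAt (fun s => (‖z s - z' s‖) ^ 2)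
      (2 * (μ + μ').re) t := by
    intro t
    have hwne : conj (z t) - conj (z' t) ≠ 0 := by
      rw [← map_sub]
      simp only [ne_eq, map_eq_zero, sub_eq_zero]
      exact hne t
    have hw : HasDerivAt (fun s => z s - z' s)
        (conj (μ + μ') / (conj (z t) - conj (z' t))) t := by
      have := (hz t).sub (hz' t)
      refine this.congr_deriv ?_; symm
      rw [map_add,
        show conj (z' t) - conj (z t) = -(conj (z t) - conj (z' t)) by ring,
        div_neg, sub_neg_eq_add, ← add_div, add_comm]
    set d : ℂ := conj (μ + μ') / (conj (z t) - conj (z' t)) with hd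
    have hcw : HasDerivAt (fun s => conj (z s - z' s)) (conj d) t := by
      exact Complex.conjCLE.toContinuousLinearMap.hasFDerivAt.comp_hasDerivAt t hw
    have hprod : HasDerivAt (fun s => (z s - z' s) * conj (z s - z' s))
        (d * conj (z t - z' t) + (z t - z' t) * conj d) t := hw.mul hcw
    have hre : HasDerivAt (fun s => ((z s - z' s) * conj (z s - z' s)).re)
        (d * conj (z t - z' t) + (z t - z' t) * conj d).re t :=
      Complex.reCLM.hasFDerivAt.comp_hasDerivAt t hprod
    have hval : (d * conj (z t - z' t) + (z t - z' t) * conj d).re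
        = 2 * (μ + μ').re := by
      have hzne : (z t - z' t) ≠ 0 := sub_ne_zero.mpr (hne t)
      have h1 : d * conj (z t - z' t) = conj (μ + μ') := by
        rw [hd, map_sub]
        field_simp
      have h2 : (z t - z' t) * conj d = μ + μ' := by
        rw [hd, map_div₀, map_sub, Complex.conj_conj, Complex.conj_conj,
          Complex.conj_conj]
        field_simp
      rw [h1, h2, Complex.add_re, Complex.conj_re]
      ring
    have heq : (fun s => (‖z s - z' s‖) ^ 2)
        = fun s => ((z s - z' s) * conj (z s - z' s)).re := by
      funext s
      rw [Complex.mul_conj, Complex.ofReal_re, Complex.sq_norm]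
    rw [heq]
    exact hval ▸ hre
  refine ⟨key, fun h0 t => ?_⟩
  have hsq : (‖z t - z' t‖) ^ 2 = (‖z 0 - z' 0‖) ^ 2 := by
    have hdiff : Differentiable ℝ (fun s => (‖z s - z' s‖) ^ 2) :=
      fun s => (key s).differentiableAt
    apply is_const_of_deriv_eq_zero hdiff
    intro x
    have := (key x).deriv
    rw [this, h0]; ring
  have h1 := norm_nonneg (z t - z' t)
  have h2 := norm_nonneg (z 0 - z' 0)
  nlinarith [hsq]
end

section
/- Consider N poles z_1, ..., z_N : ℝ → ℂ with fixed strengths μ^i, evolving by dz_i/dt = Σ_{j ≠ i} conj(μ^j)/(conj(z_i) - conj(z_j)). If Σ_i μ^i = 0, and I ⊔ I' is a partition of {1,...,N} with μ_I := Σ_{i∈I} μ^i ≠ 0 (so μ_{I'} = -μ_I ≠ 0), then the difference of subcenters (Σ_{i∈I} conj(μ^i) z_i)/conj(μ_I) - (Σ_{i∈I'} conj(μ^i) z_i)/conj(μ_{I'}) is constant in time. -/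
open Complex ComplexConjugate

/-- When the total strength vanishes, the difference of the subcenters of any
partition with nonzero partial strengths is conserved. -/
theorem stmt6 (N : ℕ) (z : Fin N → ℝ → ℂ) (μ : Fin N → ℂ)
    (hdist : ∀ t, ∀ i j, i ≠ j → z i t ≠ z j t)
    (hode : ∀ i, ∀ t, HasDerivAt (z i)
      (∑ j ∈ Finset.univ.filter (· ≠ i),
        conj (μ j) / (conj (z i t) - conj (z j t))) t)
    (hsum : ∑ i, μ i = 0)
    (I : Finset (Fin N)) (hI : ∑ i ∈ I, μ i ≠ 0) (hI' : ∑ i ∈ Iᶜ, μ i ≠ 0) :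
    ∀ t : ℝ,
      (∑ i ∈ I, conj (μ i) * z i t) / conj (∑ i ∈ I, μ i)
        - (∑ i ∈ Iᶜ, conj (μ i) * z i t) / conj (∑ i ∈ Iᶜ, μ i)
      = (∑ i ∈ I, conj (μ i) * z i 0) / conj (∑ i ∈ I, μ i)
        - (∑ i ∈ Iᶜ, conj (μ i) * z i 0) / conj (∑ i ∈ Iᶜ, μ i) := by
  have hcomp : ∑ i ∈ Iᶜ, μ i = -(∑ i ∈ I, μ i) := by
    have h := Finset.sum_add_sum_compl I μ
    rw [hsum] at h
    linear_combination h
  set F : ℝ → ℂ := fun t => ∑ i, conj (μ i) * z i t with hF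
  -- the full weighted center is conserved
  have hFd : ∀ t, HasDerivAt F 0 t := by
    intro t
    have h : HasDerivAt F (∑ i, conj (μ i) *
        (∑ j ∈ Finset.univ.filter (· ≠ i),
          conj (μ j) / (conj (z i t) - conj (z j t)))) t :=
      HasDerivAt.fun_sum fun i _ => (hode i t).const_mul _
    -- rewrite the derivative as an antisymmetric double sum and show it is 0
    set g : Fin N → Fin N → ℂ := fun i j =>
      if j ≠ i then conj (μ i) * (conj (μ j) / (conj (z i t) - conj (z j t))) else 0
      with hg
    have hrw : (∑ i, conj (μ i) *
        (∑ j ∈ Finset.univ.filter (· ≠ i),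
          conj (μ j) / (conj (z i t) - conj (z j t)))) = ∑ i, ∑ j, g i j := by
      refine Finset.sum_congr rfl fun i _ => ?_
      rw [Finset.mul_sum, Finset.sum_filter]
    have anti : ∀ i j, g i j = - g j i := by
      intro i j
      rcases eq_or_ne i j with rfl | hij
      · simp [hg]
      · simp only [hg, if_pos hij.symm, if_pos hij]
        have hd : conj (z j t) - conj (z i t) = -(conj (z i t) - conj (z j t)) := by ring
        rw [hd, div_neg]
        ring
    have hzero : (∑ i, ∑ j, g i j) = 0 := by
      have key : (∑ i, ∑ j, g i j) = - ∑ i, ∑ j, g i j := by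
        calc (∑ i, ∑ j, g i j) = ∑ j, ∑ i, g i j := Finset.sum_comm
          _ = ∑ j, ∑ i, -(g j i) := by
              refine Finset.sum_congr rfl fun j _ => Finset.sum_congr rfl fun i _ => anti i j
          _ = - ∑ j, ∑ i, g j i := by simp [Finset.sum_neg_distrib]
          _ = - ∑ i, ∑ j, g i j := rfl
      linear_combination (1/2 : ℂ) * key
    rw [hrw, hzero] at h
    exact h
  have hFconst : ∀ t, F t = F 0 := by
    intro t
    exact is_const_of_deriv_eq_zero (fun x => (hFd x).differentiableAt)
      (fun x => (hFd x).deriv) t 0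
  intro t
  have hc : conj (∑ i ∈ Iᶜ, μ i) = -conj (∑ i ∈ I, μ i) := by
    rw [hcomp, map_neg]
  have hAB : ∀ s : ℝ, (∑ i ∈ I, conj (μ i) * z i s)
      + (∑ i ∈ Iᶜ, conj (μ i) * z i s) = F s :=
    fun s => Finset.sum_add_sum_compl I _
  rw [hc, div_neg, div_neg, sub_neg_eq_add, sub_neg_eq_add,
    ← add_div, ← add_div, hAB, hAB, hFconst t]
end

section
/- Consider two poles with fixed strengths μ, μ' evolving by dz_i/dt = Σ_{j≠i} conj(μ^j)(conj(z_i) - conj(z_j))^n for a fixed even integer n ≥ 0. Then the quantity conj(μ) z - conj(μ') z' is constant in time, where z carries strength μ and z' carries strength μ'. -/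
open Complex ComplexConjugate

/-- For two poles in a homogeneous system of even degree `n`, the quantity
`conj μ z - conj μ' z'` is conserved. -/
theorem stmt7 (μ μ' : ℂ) (n : ℕ) (hn : Even n) (z z' : ℝ → ℂ)
    (hne : ∀ t, z t ≠ z' t)
    (hz : ∀ t, HasDerivAt z (conj μ' * (conj (z t) - conj (z' t)) ^ n) t)
    (hz' : ∀ t, HasDerivAt z' (conj μ * (conj (z' t) - conj (z t)) ^ n) t) :
    ∀ t : ℝ, conj μ * z t - conj μ' * z' t = conj μ * z 0 - conj μ' * z' 0 := by
  have key : ∀ t, HasDerivAt (fun t => conj μ * z t - conj μ' * z' t) 0 t := by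
    intro t
    have h := ((hz t).const_mul (conj μ)).sub ((hz' t).const_mul (conj μ'))
    refine h.congr_deriv ?_
    have : (conj (z' t) - conj (z t)) ^ n = (conj (z t) - conj (z' t)) ^ n := by
      rw [← neg_sub, hn.neg_pow]
    rw [this]; ring
  intro t
  exact is_const_of_deriv_eq_zero (fun x => (key x).differentiableAt)
    (fun x => (key x).deriv) t 0
end

section
/- Consider N poles z_1, ..., z_N : ℝ → ℂ, pairwise distinct, with fixed purely imaginary strengths μ^i, evolving by dz_i/dt = Σ_{j≠i} conj(μ^j)/(conj(z_i) - conj(z_j)). Then the Hamiltonian H = Re Σ_{i<j} μ^i μ^j log(z_i - z_j) is constant in time (for any continuous branch of log along the trajectories; equivalently, Σ_{i<j} μ^i μ^j (1/2) log|z_i - z_j|² is constant). -/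
open Complex ComplexConjugate

private lemma logAbsDeriv {f : ℝ → ℂ} {f' : ℂ} {t : ℝ} (hf : HasDerivAt f f' t)
    (h0 : f t ≠ 0) :
    HasDerivAt (fun s => Real.log ‖f s‖) ((f' / f t).re) t := by
  have hre : HasDerivAt (fun s => (f s).re) f'.re t :=
    Complex.reCLM.hasFDerivAt.comp_hasDerivAt t hf
  have him : HasDerivAt (fun s => (f s).im) f'.im t :=
    Complex.imCLM.hasFDerivAt.comp_hasDerivAt t hf
  have hsq : HasDerivAt (fun s => Complex.normSq (f s))
      (f'.re * (f t).re + (f t).re * f'.re + (f'.im * (f t).im + (f t).im * f'.im)) t := by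
    have h := (hre.mul hre).add (him.mul him)
    have heq : (fun s => (f s).re * (f s).re + (f s).im * (f s).im)
        = fun s => Complex.normSq (f s) := by
      funext u; simp [Complex.normSq_apply]
    rw [← heq]
    exact h
  have hne : Complex.normSq (f t) ≠ 0 := by
    simpa [Complex.normSq_eq_zero] using h0
  have hlog := (hsq.log hne).div_const 2
  have heq : (fun s => Real.log (Complex.normSq (f s)) / 2)
      = fun s => Real.log ‖f s‖ := by
    funext s
    rw [Complex.norm_def, Real.log_sqrt (Complex.normSq_nonneg _)]
  rw [heq] at hlog
  refine hlog.congr_deriv ?_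
  rw [Complex.div_re]
  ring

private lemma keyAlg (N : ℕ) (κ : Fin N → ℝ) (a : Fin N → ℂ) (w : Fin N → ℂ)
    (hw : ∀ i, w i = ∑ k, ((-Complex.I) * (κ k : ℂ)) / (conj (a i) - conj (a k))) :
    (∑ i, ∑ j ∈ Finset.univ.filter (i < ·),
      -(κ i * κ j * ((w i - w j) / (a i - a j)).re)) = 0 := by
  classical
  set F : Fin N → Fin N → ℝ := fun i j => κ i * κ j * (w i / (a i - a j)).re with hF
  set G : Fin N → Fin N → Fin N → ℝ := fun i j k =>
    κ i * κ j * κ k * ((-Complex.I) / ((a i - a j) * conj (a i - a k))).re with hG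
  have hFG : ∀ i j, F i j = ∑ k, G i j k := by
    intro i j
    rw [hF]
    simp only
    rw [hw i, Finset.sum_div, Complex.re_sum, Finset.mul_sum]
    refine Finset.sum_congr rfl fun k _ => ?_
    have h1 : (-Complex.I * (κ k : ℂ)) / (conj (a i) - conj (a k)) / (a i - a j)
        = (κ k : ℂ) * ((-Complex.I) / ((a i - a j) * conj (a i - a k))) := by
      rw [← map_sub, div_div, mul_comm ((starRingEnd ℂ) (a i - a k)) (a i - a j),
        mul_comm (-Complex.I) ((κ k : ℂ)), mul_div_assoc]
    rw [h1, Complex.re_ofReal_mul, hG]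
    ring
  have hGswap : ∀ i j k, G i j k = -G i k j := by
    intro i j k
    have h2 : (-Complex.I) / ((a i - a j) * conj (a i - a k))
        = -conj ((-Complex.I) / ((a i - a k) * conj (a i - a j))) := by
      rw [map_div₀, map_mul, Complex.conj_conj, map_neg, Complex.conj_I, neg_neg,
        ← neg_div, mul_comm ((starRingEnd ℂ) (a i - a k)) (a i - a j)]
    simp only [hG, h2, Complex.neg_re, Complex.conj_re]
    ring
  have hrow : ∀ i, (∑ j, F i j) = 0 := by
    intro i
    have h3 : (∑ j, ∑ k, G i j k) = -(∑ j, ∑ k, G i j k) :=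
      calc (∑ j, ∑ k, G i j k) = ∑ k, ∑ j, G i j k := Finset.sum_comm
        _ = ∑ k, ∑ j, -(G i k j) := by
            exact Finset.sum_congr rfl fun k _ =>
              Finset.sum_congr rfl fun j _ => hGswap i j k
        _ = -(∑ k, ∑ j, G i k j) := by
            simp [Finset.sum_neg_distrib]
        _ = -(∑ j, ∑ k, G i j k) := rfl
    have h4 : (∑ j, ∑ k, G i j k) = 0 := by linarith
    calc (∑ j, F i j) = ∑ j, ∑ k, G i j k :=
          Finset.sum_congr rfl fun j _ => hFG i j
      _ = 0 := h4
  have hdiag : ∀ i, F i i = 0 := by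
    intro i
    simp [hF]
  have hterm : ∀ i j : Fin N,
      -(κ i * κ j * ((w i - w j) / (a i - a j)).re) = -(F i j + F j i) := by
    intro i j
    have h2 : w j / (a j - a i) = -(w j / (a i - a j)) := by
      rw [← neg_sub (a i) (a j), div_neg]
    simp only [hF, sub_div, Complex.sub_re, h2, Complex.neg_re]
    ring
  have hswap : (∑ i, ∑ j ∈ Finset.univ.filter (i < ·), F j i)
      = ∑ i, ∑ j ∈ Finset.univ.filter (· < i), F i j := by
    exact Finset.sum_comm' (by simp)
  have hsplit : ∀ i, ((∑ j ∈ Finset.univ.filter (i < ·), F i j)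
      + ∑ j ∈ Finset.univ.filter (· < i), F i j) = ∑ j, F i j := by
    intro i
    rw [← Finset.sum_filter_add_sum_filter_not Finset.univ (fun j => i < j) (F i)]
    congr 1
    apply Finset.sum_subset
    · intro j hj
      simp only [Finset.mem_filter, Finset.mem_univ, true_and] at hj ⊢
      exact hj.asymm
    · intro j hj hnj
      simp only [Finset.mem_filter, Finset.mem_univ, true_and] at hj hnj
      have : j = i := le_antisymm (not_lt.1 hj) (not_lt.1 hnj)
      rw [this]
      exact hdiag i
  calc (∑ i, ∑ j ∈ Finset.univ.filter (i < ·),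
          -(κ i * κ j * ((w i - w j) / (a i - a j)).re))
      = ∑ i, ∑ j ∈ Finset.univ.filter (i < ·), -(F i j + F j i) := by
        exact Finset.sum_congr rfl fun i _ =>
          Finset.sum_congr rfl fun j _ => hterm i j
    _ = -((∑ i, ∑ j ∈ Finset.univ.filter (i < ·), F i j)
          + ∑ i, ∑ j ∈ Finset.univ.filter (i < ·), F j i) := by
        simp [Finset.sum_add_distrib, Finset.sum_neg_distrib, neg_add]
    _ = -(∑ i, ((∑ j ∈ Finset.univ.filter (i < ·), F i j)
          + ∑ j ∈ Finset.univ.filter (· < i), F i j)) := by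
        rw [hswap, Finset.sum_add_distrib]
    _ = -(∑ i, ∑ j, F i j) := by
        rw [Finset.sum_congr rfl fun i _ => hsplit i]
    _ = 0 := by simp [hrow]

/-- For point vortices (purely imaginary strengths `μ i = I * κ i`), the
Hamiltonian `H = -∑_{i<j} κ_i κ_j log |z_i - z_j|` is conserved. -/
theorem stmt8 (N : ℕ) (z : Fin N → ℝ → ℂ) (κ : Fin N → ℝ)
    (μ : Fin N → ℂ) (hμ : ∀ i, μ i = Complex.I * (κ i : ℂ))
    (hdist : ∀ t, ∀ i j, i ≠ j → z i t ≠ z j t)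
    (hode : ∀ i, ∀ t, HasDerivAt (z i)
      (∑ j ∈ Finset.univ.filter (· ≠ i),
        conj (μ j) / (conj (z i t) - conj (z j t))) t) :
    ∀ t : ℝ,
      (∑ i, ∑ j ∈ Finset.univ.filter (i < ·),
          -(κ i * κ j * Real.log (‖z i t - z j t‖)))
      = ∑ i, ∑ j ∈ Finset.univ.filter (i < ·),
          -(κ i * κ j * Real.log (‖z i 0 - z j 0‖)) := by
  classical
  intro t
  set H : ℝ → ℝ := fun s => ∑ i, ∑ j ∈ Finset.univ.filter (i < ·),
      -(κ i * κ j * Real.log (‖z i s - z j s‖)) with hHdef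
  suffices h : ∀ s, HasDerivAt H 0 s by
    exact is_const_of_deriv_eq_zero (fun s => (h s).differentiableAt)
      (fun s => (h s).deriv) t 0
  intro s
  -- the velocity of vortex i at time s
  set w : Fin N → ℂ := fun i => ∑ j ∈ Finset.univ.filter (· ≠ i),
      conj (μ j) / (conj (z i s) - conj (z j s)) with hwdef
  have hw : ∀ i, w i = ∑ k, ((-Complex.I) * (κ k : ℂ))
      / (conj (z i s) - conj (z k s)) := by
    intro i
    rw [hwdef]
    simp only
    rw [Finset.sum_filter]
    refine Finset.sum_congr rfl fun k _ => ?_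
    by_cases hk : k ≠ i
    · rw [if_pos hk, hμ k]
      congr 1
      simp [Complex.ext_iff]
    · rw [if_neg hk]
      push_neg at hk
      subst hk
      simp
  have hD : HasDerivAt H (∑ i, ∑ j ∈ Finset.univ.filter (i < ·),
      -(κ i * κ j * ((w i - w j) / (z i s - z j s)).re)) s := by
    refine HasDerivAt.fun_sum fun i _ => HasDerivAt.fun_sum fun j hj => ?_
    have hij : i ≠ j := by
      simp only [Finset.mem_filter] at hj
      exact ne_of_lt hj.2
    have hzij : z i s - z j s ≠ 0 := sub_ne_zero.mpr (hdist s i j hij)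
    have hder : HasDerivAt (fun u => z i u - z j u) (w i - w j) s :=
      (hode i s).sub (hode j s)
    have := (logAbsDeriv hder hzij).const_mul (κ i * κ j)
    exact this.neg
  have hz : (∑ i, ∑ j ∈ Finset.univ.filter (i < ·),
      -(κ i * κ j * ((w i - w j) / (z i s - z j s)).re)) = 0 :=
    keyAlg N κ (fun i => z i s) w hw
  rw [hz] at hD
  exact hD
end

section
/- Let S : ℂ → ℝ with S(z) = S₀(Im z) depending only on Im z, where S₀ : ℝ → ℝ is continuous, and let σ be an antiderivative of S₀. Consider N vortices z_i : ℝ → ℂ, pairwise distinct, with purely imaginary constants μ^i = i κ_i (κ_i ∈ ℝ), evolving by dz_i/dt = Σ_{j≠i} conj(μ^j) S(z_j) / (conj(z_i) - conj(z_j)). Then ψ = Σ_i κ_i σ(Im z_i) is constant in time. -/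
open Complex ComplexConjugate

lemma aux_anti (d : ℂ) (r s : ℝ) :
    r * ((-I * (s : ℂ)) / d).im = s * ((-I * (r : ℂ)) / (-d)).im * (-1) := by
  simp [Complex.div_im, Complex.mul_im, Complex.mul_re]
  ring

/-- Noether-type conservation law for a translation-invariant seabed
`S(z) = S₀(Im z)`: the momentum `ψ = ∑ κ_i σ(Im z_i)` is conserved. -/
theorem stmt12 (N : ℕ) (S₀ : ℝ → ℝ) (hS₀ : Continuous S₀)
    (σ : ℝ → ℝ) (hσ : ∀ y, HasDerivAt σ (S₀ y) y)
    (z : Fin N → ℝ → ℂ) (κ : Fin N → ℝ) (μ : Fin N → ℂ)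
    (hμ : ∀ i, μ i = Complex.I * (κ i : ℂ))
    (hdist : ∀ t, ∀ i j, i ≠ j → z i t ≠ z j t)
    (hode : ∀ i, ∀ t, HasDerivAt (z i)
      (∑ j ∈ Finset.univ.filter (· ≠ i),
        conj (μ j) * (S₀ ((z j t).im) : ℂ) / (conj (z i t) - conj (z j t))) t) :
    ∀ t : ℝ, ∑ i, κ i * σ ((z i t).im) = ∑ i, κ i * σ ((z i 0).im) := by
  set v : Fin N → ℝ → ℂ := fun i t =>
    ∑ j ∈ Finset.univ.filter (· ≠ i),
      conj (μ j) * (S₀ ((z j t).im) : ℂ) / (conj (z i t) - conj (z j t)) with hv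
  -- individual term in e
  set e : Fin N → Fin N → ℝ → ℝ := fun i j t =>
    κ i * S₀ ((z i t).im) *
      (conj (μ j) * (S₀ ((z j t).im) : ℂ) / (conj (z i t) - conj (z j t))).im with he
  have hanti : ∀ t, ∀ i j : Fin N, e i j t = - e j i t := by
    intro t i j
    simp only [he, hμ, map_mul, Complex.conj_I, Complex.conj_ofReal]
    have h1 : conj (z j t) - conj (z i t) = -(conj (z i t) - conj (z j t)) := by ring
    rw [h1]
    simp [Complex.div_im, Complex.mul_im, Complex.mul_re, Complex.normSq_apply,
      Complex.add_re, Complex.add_im, Complex.neg_re, Complex.neg_im]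
    ring
  have hderiv : ∀ i t, HasDerivAt (fun t => σ ((z i t).im))
      (S₀ ((z i t).im) * (v i t).im) t := by
    intro i t
    have him : HasDerivAt (fun t => (z i t).im) ((v i t).im) t := by
      have := (Complex.imCLM.hasFDerivAt (x := z i t)).comp_hasDerivAt t (hode i t)
      exact this
    exact (hσ ((z i t).im)).comp t him
  have hF : ∀ t, HasDerivAt (fun t => ∑ i, κ i * σ ((z i t).im))
      (∑ i, ∑ j ∈ Finset.univ.filter (· ≠ i), e i j t) t := by
    intro t
    have h1 : HasDerivAt (fun t => ∑ i, κ i * σ ((z i t).im))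
        (∑ i, κ i * (S₀ ((z i t).im) * (v i t).im)) t :=
      HasDerivAt.fun_sum fun i _ => (hderiv i t).const_mul (κ i)
    convert h1 using 1
    refine Finset.sum_congr rfl fun i _ => ?_
    rw [hv]
    rw [Complex.im_sum, Finset.mul_sum, Finset.mul_sum]
    refine Finset.sum_congr rfl fun j _ => ?_
    simp only [he]; ring
  have hzero : ∀ t, (∑ i, ∑ j ∈ Finset.univ.filter (· ≠ i), e i j t) = 0 := by
    intro t
    have hswap : (∑ i, ∑ j ∈ Finset.univ.filter (· ≠ i), e i j t)
        = ∑ j, ∑ i ∈ Finset.univ.filter (· ≠ j), e i j t := by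
      refine Finset.sum_comm' ?_
      intro x y
      simp [ne_comm, eq_comm]
    have hneg : (∑ j, ∑ i ∈ Finset.univ.filter (· ≠ j), e i j t)
        = - ∑ j, ∑ i ∈ Finset.univ.filter (· ≠ j), e j i t := by
      rw [← Finset.sum_neg_distrib]
      refine Finset.sum_congr rfl fun j _ => ?_
      rw [← Finset.sum_neg_distrib]
      exact Finset.sum_congr rfl fun i _ => hanti t i j
    have h2 : (∑ i, ∑ j ∈ Finset.univ.filter (· ≠ i), e i j t)
        = - ∑ j, ∑ i ∈ Finset.univ.filter (· ≠ j), e j i t := hswap.trans hneg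
    linarith [h2]
  have hdiff : Differentiable ℝ (fun t => ∑ i, κ i * σ ((z i t).im)) :=
    fun x => (hF x).differentiableAt
  intro t
  exact is_const_of_deriv_eq_zero hdiff
    (fun x => by rw [(hF x).deriv, hzero x]) t 0
end

section
/- Let S : ℂ → ℝ with S(z) = S₀(|z|²) depending only on |z|², where S₀ : ℝ → ℝ is continuous, and let σ be an antiderivative of S₀. Consider N vortices z_i : ℝ → ℂ, pairwise distinct, with purely imaginary constants μ^i = i κ_i, evolving by dz_i/dt = Σ_{j≠i} conj(μ^j) S(z_j)/(conj(z_i) - conj(z_j)). Then ψ = Σ_i κ_i σ(|z_i|²) is constant in time. -/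
open Complex ComplexConjugate

/-- Noether-type conservation law for a rotation-invariant seabed
`S(z) = S₀(|z|²)`: the generalized angular impulse `ψ = ∑ κ_i σ(|z_i|²)` is
conserved. -/
theorem stmt13 (N : ℕ) (S₀ : ℝ → ℝ) (hS₀ : Continuous S₀)
    (σ : ℝ → ℝ) (hσ : ∀ u, HasDerivAt σ (S₀ u) u)
    (z : Fin N → ℝ → ℂ) (κ : Fin N → ℝ) (μ : Fin N → ℂ)
    (hμ : ∀ i, μ i = Complex.I * (κ i : ℂ))
    (hdist : ∀ t, ∀ i j, i ≠ j → z i t ≠ z j t)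
    (hode : ∀ i, ∀ t, HasDerivAt (z i)
      (∑ j ∈ Finset.univ.filter (· ≠ i),
        conj (μ j) * (S₀ (‖z j t‖ ^ 2) : ℂ)
          / (conj (z i t) - conj (z j t))) t) :
    ∀ t : ℝ, ∑ i, κ i * σ (‖z i t‖ ^ 2)
      = ∑ i, κ i * σ (‖z i 0‖ ^ 2) := by
  suffices h : ∀ t, HasDerivAt (fun t => ∑ i, κ i * σ (‖z i t‖ ^ 2)) 0 t by
    intro t
    exact is_const_of_deriv_eq_zero (fun x => (h x).differentiableAt)
      (fun x => (h x).deriv) t 0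
  intro t
  -- abbreviations at time t
  set w : Fin N → ℂ := fun i => z i t with hw
  set s : Fin N → ℝ := fun i => S₀ (‖z i t‖ ^ 2) with hs
  set v : Fin N → ℂ := fun i => ∑ j ∈ Finset.univ.filter (· ≠ i),
      conj (μ j) * (s j : ℂ) / (conj (z i t) - conj (z j t)) with hv
  have hnorm : ∀ i, HasDerivAt (fun u => ‖z i u‖ ^ 2)
      (2 * (v i * conj (z i t)).re) t := by
    intro i
    have h1 : HasDerivAt (z i) (v i) t := hode i t
    have h2 : HasDerivAt (fun u => (starRingEnd ℂ) (z i u)) ((starRingEnd ℂ) (v i)) t := h1.star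
    have h3 := h1.mul h2
    have h4 := Complex.reCLM.hasFDerivAt.comp_hasDerivAt t h3
    have heq : (fun u => Complex.reCLM (z i u * (starRingEnd ℂ) (z i u)))
        = fun u => ‖z i u‖ ^ 2 := by
      funext u
      simp only [Complex.reCLM_apply, Complex.mul_conj, Complex.sq_norm, Complex.ofReal_re]
    simp only [Function.comp_def, Pi.mul_apply] at h4
    rw [heq] at h4
    refine h4.congr_deriv ?_
    simp only [Complex.reCLM_apply, Complex.add_re, Complex.mul_re, Complex.conj_re,
      Complex.conj_im]
    ring
  have hterm : ∀ i, HasDerivAt (fun u => κ i * σ (‖z i u‖ ^ 2))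
      (κ i * (s i * (2 * (v i * conj (z i t)).re))) t := by
    intro i
    exact ((hσ _).comp t (hnorm i)).const_mul (κ i)
  have hsum : HasDerivAt (fun u => ∑ i, κ i * σ (‖z i u‖ ^ 2))
      (∑ i, κ i * (s i * (2 * (v i * conj (z i t)).re))) t :=
    HasDerivAt.fun_sum (fun i _ => hterm i)
  -- the algebraic cancellation
  set g : Fin N → Fin N → ℂ := fun i j =>
    (κ i : ℂ) * (s i : ℂ) * 2 *
      (conj (μ j) * (s j : ℂ) / (conj (z i t) - conj (z j t)) * conj (z i t)) with hg
  have hgii : ∀ i, g i i = 0 := by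
    intro i
    simp [hg]
  have hganti : ∀ i j, (g i j).re + (g j i).re = 0 := by
    intro i j
    rcases eq_or_ne i j with rfl | hij
    · simp [hgii i]
    · have hab : conj (z i t) - conj (z j t) ≠ 0 := by
        rw [sub_ne_zero]
        exact fun h => hdist t i j hij ((starRingEnd ℂ).injective h)
      have hba : conj (z j t) - conj (z i t) ≠ 0 := by
        rw [sub_ne_zero]
        exact fun h => hdist t j i hij.symm ((starRingEnd ℂ).injective h)
      have hkey : g i j + g j i = ((-2 * (κ i * s i * (κ j * s j)) : ℝ) : ℂ) * Complex.I := by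
        simp only [hg, hμ i, hμ j, map_mul, Complex.conj_I, Complex.conj_ofReal]
        push_cast
        field_simp
        ring
      have : (g i j + g j i).re = 0 := by
        rw [hkey, Complex.re_ofReal_mul, Complex.I_re, mul_zero]
      rw [Complex.add_re] at this
      exact this
  have hrew : ∀ i, κ i * (s i * (2 * (v i * conj (z i t)).re)) = ∑ j, (g i j).re := by
    intro i
    have h1 : v i * conj (z i t) = ∑ j ∈ Finset.univ.filter (· ≠ i),
        conj (μ j) * (s j : ℂ) / (conj (z i t) - conj (z j t)) * conj (z i t) :=
      Finset.sum_mul _ _ _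
    have h2 : ∑ j, (g i j).re = ∑ j ∈ Finset.univ.filter (· ≠ i), (g i j).re := by
      rw [eq_comm]
      apply Finset.sum_subset (Finset.filter_subset _ _)
      intro j _ hj
      simp only [Finset.mem_filter, Finset.mem_univ, true_and, not_not] at hj
      rw [hj, hgii]
      rfl
    rw [h2, h1, Complex.re_sum]
    simp only [Finset.mul_sum]
    refine Finset.sum_congr rfl fun j _ => ?_
    simp only [hg]
    rw [show (κ i : ℂ) * (s i : ℂ) * 2 = ((κ i * s i * 2 : ℝ) : ℂ) by push_cast; ring,
      Complex.re_ofReal_mul]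
    ring
  have hzero : (∑ i, κ i * (s i * (2 * (v i * conj (z i t)).re))) = 0 := by
    simp_rw [hrew]
    have h2 : (∑ i, ∑ j, (g i j).re) + (∑ i, ∑ j, (g i j).re) = 0 := by
      nth_rewrite 2 [Finset.sum_comm]
      rw [← Finset.sum_add_distrib]
      simp_rw [← Finset.sum_add_distrib]
      exact Finset.sum_eq_zero fun i _ => Finset.sum_eq_zero fun j _ => hganti i j
    linarith
  rw [hzero] at hsum
  exact hsum
end
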